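/- Let G be a finite graph with q-state Potts Hamiltonian h(σ) = −Σ_{{i,j}∈E} J_{ij} δ(σ_i,σ_j) − Σ_i Σ_{α=1}^q M_{i,α} δ(α,σ_i) and partition function Z_ext(G) = Σ_σ e^{−βh(σ)}. Then Z_ext admits the spanning forest expansion Z_ext(G) = Σ_{F∈F(G)} X(F) · (∏_{e∈F}(e^{βJ_e} − 1)) · (∏_{e externally active w.r.t. F} e^{βJ_e}), where for each spanning forest F with components F_1,…,F_k, X(F) = ∏_i X_{c_i}, c_i is the sum of the field vectors M over the vertices of F_i, and X_M = Σ_{α=1}^q e^{βM_α}. -/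

import Mathlib

open scoped Classical
open Finset

structure PottsGraph (V E : Type) where
  ends : E → Sym2 V

namespace PottsGraph

variable {V E S R : Type} [Fintype V] [Fintype E]

/-- Two vertices are joined by an edge of `A`. -/
def adjRel (G : PottsGraph V E) (A : Finset E) (u v : V) : Prop :=
  ∃ e ∈ A, G.ends e = s(u, v)

/-- The setoid on vertices whose classes are the connected components of the
spanning subgraph `(V, A)`. -/
def compSetoid (G : PottsGraph V E) (A : Finset E) : Setoid V :=
  ⟨Relation.EqvGen (G.adjRel A), Relation.EqvGen.is_equivalence _⟩

/-- The connected components of the spanning subgraph `(V, A)`. -/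
def Comp (G : PottsGraph V E) (A : Finset E) : Type := Quotient (G.compSetoid A)

noncomputable instance (G : PottsGraph V E) (A : Finset E) : Fintype (G.Comp A) :=
  @Quotient.fintype V _ (G.compSetoid A) (Classical.decRel _)

/-- `k(A)`: the number of connected components of the spanning subgraph `(V, A)`. -/
noncomputable def kA (G : PottsGraph V E) (A : Finset E) : ℕ := Nat.card (G.Comp A)

/-- `u` and `v` are connected in the spanning subgraph `(V, A)`. -/
def Connects (G : PottsGraph V E) (A : Finset E) (u v : V) : Prop :=
  Relation.EqvGen (G.adjRel A) u v

/-- The endpoints of `e` are connected in the spanning subgraph `(V, A)`. -/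
def EndsConnected (G : PottsGraph V E) (A : Finset E) (e : E) : Prop :=
  ∃ u v, G.ends e = s(u, v) ∧ G.Connects A u v

def IsLoop (G : PottsGraph V E) (e : E) : Prop := (G.ends e).IsDiag

/-- `(V, A)` is a forest (acyclic spanning subgraph): every edge of `A` is a bridge of it. -/
def IsForest (G : PottsGraph V E) (A : Finset E) : Prop :=
  ∀ e ∈ A, ¬ G.EndsConnected (A.erase e) e

/-- All vertices are pairwise connected using edges of `A`. -/
def ConnectsAll (G : PottsGraph V E) (A : Finset E) : Prop := ∀ u v, G.Connects A u v

/-- A maximal spanning forest: a forest restricting to a spanning tree of each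
connected component of `G`. -/
def IsSpanningTree (G : PottsGraph V E) (T : Finset E) : Prop :=
  G.IsForest T ∧ ∀ u v, G.Connects T u v ↔ G.Connects Finset.univ u v

/-- `e ∈ T` is internally active: `e` is minimal in the cut
`{f : (T - e) ∪ {f} ∈ 𝒯(G)}`. -/
def IntActive [LinearOrder E] (G : PottsGraph V E) (T : Finset E) (e : E) : Prop :=
  e ∈ T ∧ ∀ f, G.IsSpanningTree (insert f (T.erase e)) → e ≤ f

/-- The edge set of the unique cycle of `T ∪ {e}` (when it exists):
`e` together with those `f ∈ T` whose removal disconnects the ends of `e`. -/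
noncomputable def cycleEdges (G : PottsGraph V E) (T : Finset E) (e : E) : Finset E :=
  insert e (T.filter fun f => ¬ G.EndsConnected (T.erase f) e)

/-- `e ∉ T` is externally active: `T ∪ {e}` contains a cycle through `e` and
`e` is the minimal edge of that cycle. -/
def ExtActive [LinearOrder E] (G : PottsGraph V E) (T : Finset E) (e : E) : Prop :=
  e ∉ T ∧ G.EndsConnected T e ∧ ∀ f ∈ G.cycleEdges T e, e ≤ f

/-- The vertex set of the component `c` of `(V, A)`. -/
noncomputable def compVerts (G : PottsGraph V E) (A : Finset E) (c : G.Comp A) : Finset V :=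
  Finset.univ.filter fun v => (Quotient.mk (G.compSetoid A) v) = c

/-- The total vertex weight of the component `c` of `(V, A)`. -/
noncomputable def compWeight [AddCommMonoid S] (G : PottsGraph V E) (A : Finset E)
    (ω : V → S) (c : G.Comp A) : S :=
  ∑ v ∈ G.compVerts A c, ω v

/-- The V-polynomial, defined by its state sum. -/
noncomputable def Vpoly [AddCommMonoid S] [CommRing R] (G : PottsGraph V E)
    (ω : V → S) (γ : E → R) : MvPolynomial S R :=
  ∑ A : Finset E, (∏ c : G.Comp A, MvPolynomial.X (G.compWeight A ω c)) *
    MvPolynomial.C (∏ e ∈ A, γ e)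

/-- The multivariate Tutte polynomial `Z_T(G; q, γ)` as a polynomial in `q`. -/
noncomputable def ZT [CommRing R] (G : PottsGraph V E) (γ : E → R) : Polynomial R :=
  ∑ A : Finset E, Polynomial.X ^ (G.kA A) * Polynomial.C (∏ e ∈ A, γ e)

/-- Deletion of the edge `e`. -/
def del (G : PottsGraph V E) (e : E) : PottsGraph V {f : E // f ≠ e} := ⟨fun f => G.ends f.1⟩

/-- Contraction of the edge `e`: vertices are the components of `(V, {e})`. -/
noncomputable def contract (G : PottsGraph V E) (e : E) : PottsGraph (G.Comp {e}) {f : E // f ≠ e} :=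
  ⟨fun f => (G.ends f.1).map (Quotient.mk (G.compSetoid {e}))⟩

/-- The forest `T` with the edges of `B` contracted: vertices are the components
of `(V, B)` and edges are `T \ B`. -/
noncomputable def contractIn (G : PottsGraph V E) (T B : Finset E) :
    PottsGraph (G.Comp B) ↥(T \ B : Finset E) :=
  ⟨fun f => (G.ends f.1).map (Quotient.mk (G.compSetoid B))⟩

/-- The edges of `G` with both ends inside `P`. -/
noncomputable def edgesIn (G : PottsGraph V E) (P : Finset V) : Finset E :=
  Finset.univ.filter fun e => ∀ v ∈ G.ends e, v ∈ P

/-- The subgraph of `G` induced by the vertex set `P`. -/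
noncomputable def induce (G : PottsGraph V E) (P : Finset V) : PottsGraph ↥P ↥(G.edgesIn P) :=
  ⟨fun e => (G.ends e.1).pmap (fun v hv => (⟨v, hv⟩ : ↥P))
    (by have he := e.2; simp only [edgesIn, Finset.mem_filter] at he; exact he.2)⟩

/-- The block `B` induces a connected subgraph of `G`. -/
def BlockConnected (G : PottsGraph V E) (B : Finset V) : Prop :=
  ∀ u ∈ B, ∀ v ∈ B, Relation.EqvGen (G.adjRel (G.edgesIn B)) u v

/-- A connected partition of `V(G)`: every vertex lies in exactly one block,
blocks are nonempty, and each block induces a connected subgraph. -/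
def IsConnectedPartition (G : PottsGraph V E) (P : Finset (Finset V)) : Prop :=
  (∀ B ∈ P, B.Nonempty) ∧ (∀ v : V, ∃! B, B ∈ P ∧ v ∈ B) ∧ ∀ B ∈ P, G.BlockConnected B

/-- The partition `Π(A)` of `V(G)` into the components of `(V, A)`. -/
noncomputable def partitionOf (G : PottsGraph V E) (A : Finset E) : Finset (Finset V) :=
  Finset.univ.image fun c : G.Comp A => G.compVerts A c

/-- The internally inactive edges of the spanning tree `T`. -/
noncomputable def intInactives [LinearOrder E] (G : PottsGraph V E) (T : Finset E) : Finset E :=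
  T.filter fun e => ¬ G.IntActive T e

/-- The internally active edges of the spanning tree `T`. -/
noncomputable def intActives [LinearOrder E] (G : PottsGraph V E) (T : Finset E) : Finset E :=
  T.filter fun e => G.IntActive T e

/-- The externally active edges w.r.t. the spanning tree / forest `T`. -/
noncomputable def extActives [LinearOrder E] (G : PottsGraph V E) (T : Finset E) : Finset E :=
  Finset.univ.filter fun e => G.ExtActive T e

/-- Kronecker delta `δ(σ_i, σ_j)` for the two ends of the edge `e`. -/
noncomputable def edgeDelta (G : PottsGraph V E) {q : ℕ} (σ : V → Fin q) (e : E) : ℂ :=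
  Sym2.lift ⟨fun u v => if σ u = σ v then 1 else 0, fun u v => by simp [eq_comm]⟩ (G.ends e)

/-- The Potts partition function with variable interactions `J` and
field vectors `M`. -/
noncomputable def Zext (G : PottsGraph V E) (q : ℕ) (β : ℂ) (J : E → ℂ) (M : V → Fin q → ℂ) : ℂ :=
  ∑ σ : V → Fin q, Complex.exp (β * ((∑ e : E, J e * G.edgeDelta σ e) +
    ∑ v : V, ∑ α : Fin q, M v α * (if α = σ v then 1 else 0)))

/-- The Potts partition function with constant interaction `J` and constant
field `H` favouring the first spin. -/
noncomputable def ZconstField (G : PottsGraph V E) (q : ℕ) (β J H : ℂ) : ℂ :=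
  ∑ σ : V → Fin q, Complex.exp (β * (J * (∑ e : E, G.edgeDelta σ e) +
    H * ∑ v : V, (if (σ v : ℕ) = 0 then (1 : ℂ) else 0)))

/-- The zero-field Potts partition function with constant interaction `J`. -/
noncomputable def Zzero (G : PottsGraph V E) (q : ℕ) (β J : ℂ) : ℂ :=
  ∑ σ : V → Fin q, Complex.exp (β * J * ∑ e : E, G.edgeDelta σ e)

end PottsGraph

set_option linter.unusedSectionVars false
set_option linter.unusedVariables false

namespace PottsGraph

variable {V E : Type} [Fintype V] [Fintype E]

noncomputable local instance (priority := 2000) : DecidableEq E := fun a b => Classical.propDecidable _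

lemma exists_ends (G : PottsGraph V E) (e : E) : ∃ a b, G.ends e = s(a, b) :=
  Sym2.ind (f := fun z => ∃ a b, z = s(a, b)) (fun x y => ⟨x, y, rfl⟩) (G.ends e)

lemma connects_mono (G : PottsGraph V E) {A B : Finset E} (h : A ⊆ B) {u v : V}
    (hc : G.Connects A u v) : G.Connects B u v :=
  Relation.EqvGen.mono (r := G.adjRel A) (p := G.adjRel B) (fun u v ⟨e, he, hee⟩ => ⟨e, h he, hee⟩) u v hc

lemma connects_of_adj (G : PottsGraph V E) {A : Finset E} {e : E} {u v : V} (he : e ∈ A)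
    (h : G.ends e = s(u, v)) : G.Connects A u v :=
  Relation.EqvGen.rel _ _ ⟨e, he, h⟩

lemma connects_of_endsConn (G : PottsGraph V E) {A : Finset E} {e : E} {u v : V}
    (h : G.EndsConnected A e) (huv : G.ends e = s(u, v)) : G.Connects A u v := by
  obtain ⟨a, b, hab, hc⟩ := h
  rw [huv] at hab
  rcases Sym2.eq_iff.mp hab with ⟨rfl, rfl⟩ | ⟨rfl, rfl⟩
  · exact hc
  · exact Relation.EqvGen.symm _ _ hc

lemma endsConn_mono (G : PottsGraph V E) {A B : Finset E} (h : A ⊆ B) {e : E}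
    (hc : G.EndsConnected A e) : G.EndsConnected B e := by
  obtain ⟨a, b, hab, hcc⟩ := hc
  exact ⟨a, b, hab, G.connects_mono h hcc⟩

/-- If each edge of `A` either lies in `C` or has its ends connected in `C`, then
connectivity in `A` implies connectivity in `C`. -/
lemma connects_reroute (G : PottsGraph V E) {A C : Finset E}
    (h : ∀ f ∈ A, f ∈ C ∨ G.EndsConnected C f) {u v : V}
    (hc : G.Connects A u v) : G.Connects C u v := by
  induction hc with
  | rel x y hxy =>
    obtain ⟨e, he, hee⟩ := hxy
    rcases h e he with hC | hEC
    · exact G.connects_of_adj hC hee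
    · exact G.connects_of_endsConn hEC hee
  | refl x => exact Relation.EqvGen.refl _
  | symm x y _ ih => exact Relation.EqvGen.symm _ _ ih
  | trans x y z _ _ ih1 ih2 => exact Relation.EqvGen.trans _ _ _ ih1 ih2

/-- Decomposition of connectivity in `insert m B` relative to the ends of `m`. -/
lemma connects_insert_cases (G : PottsGraph V E) {B : Finset E} {m : E} {a b : V}
    (hm : G.ends m = s(a, b)) {u v : V} (hc : G.Connects (insert m B) u v) :
    G.Connects B u v ∨ (G.Connects B u a ∧ G.Connects B b v) ∨
      (G.Connects B u b ∧ G.Connects B a v) := by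
  induction hc with
  | rel x y hxy =>
    obtain ⟨e, he, hee⟩ := hxy
    rcases Finset.mem_insert.mp he with rfl | heB
    · rw [hm] at hee
      rcases Sym2.eq_iff.mp hee with ⟨rfl, rfl⟩ | ⟨rfl, rfl⟩
      · exact Or.inr (Or.inl ⟨Relation.EqvGen.refl _, Relation.EqvGen.refl _⟩)
      · exact Or.inr (Or.inr ⟨Relation.EqvGen.refl _, Relation.EqvGen.refl _⟩)
    · exact Or.inl (G.connects_of_adj heB hee)
  | refl x => exact Or.inl (Relation.EqvGen.refl _)
  | symm x y _ ih =>
    rcases ih with h | ⟨h1, h2⟩ | ⟨h1, h2⟩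
    · exact Or.inl (Relation.EqvGen.symm _ _ h)
    · exact Or.inr (Or.inr ⟨Relation.EqvGen.symm _ _ h2, Relation.EqvGen.symm _ _ h1⟩)
    · exact Or.inr (Or.inl ⟨Relation.EqvGen.symm _ _ h2, Relation.EqvGen.symm _ _ h1⟩)
  | trans x y z _ _ ih1 ih2 =>
    rcases ih1 with h | ⟨h1, h2⟩ | ⟨h1, h2⟩ <;>
      rcases ih2 with h' | ⟨h1', h2'⟩ | ⟨h1', h2'⟩
    · exact Or.inl (Relation.EqvGen.trans _ _ _ h h')
    · exact Or.inr (Or.inl ⟨Relation.EqvGen.trans _ _ _ h h1', h2'⟩)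
    · exact Or.inr (Or.inr ⟨Relation.EqvGen.trans _ _ _ h h1', h2'⟩)
    · exact Or.inr (Or.inl ⟨h1, Relation.EqvGen.trans _ _ _ h2 h'⟩)
    · exact Or.inr (Or.inl ⟨h1, h2'⟩)
    · exact Or.inl (Relation.EqvGen.trans _ _ _ h1 h2')
    · exact Or.inr (Or.inr ⟨h1, Relation.EqvGen.trans _ _ _ h2 h'⟩)
    · exact Or.inl (Relation.EqvGen.trans _ _ _ h1 h2')
    · exact Or.inr (Or.inr ⟨h1, h2'⟩)

lemma IsForest.subset' (G : PottsGraph V E) {F F' : Finset E} (hF : G.IsForest F)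
    (h : F' ⊆ F) : G.IsForest F' := fun e he hc =>
  hF e (h he) (G.endsConn_mono (Finset.erase_subset_erase _ h) hc)

/-- In a forest, if `u, v` are connected avoiding `f` and also avoiding `g`, then
they are connected avoiding both. -/
lemma forest_erase_erase (G : PottsGraph V E) {F : Finset E} (hF : G.IsForest F) {f g : E}
    (hf : f ∈ F) {u v : V} (h1 : G.Connects (F.erase f) u v)
    (h2 : G.Connects (F.erase g) u v) :
    G.Connects ((F.erase f).erase g) u v := by
  by_cases hgF : g ∈ F
  · by_cases hfg : f = g
    · subst hfg
      rwa [Finset.erase_idem]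
    · obtain ⟨a, b, hab⟩ := G.exists_ends f
      have hfmem : f ∈ F.erase g := Finset.mem_erase.mpr ⟨hfg, hf⟩
      rw [← Finset.insert_erase hfmem] at h2
      have hBsub : (F.erase g).erase f ⊆ F.erase f := by
        intro x hx
        simp only [Finset.mem_erase] at hx ⊢
        exact ⟨hx.1, hx.2.2⟩
      have hBsub' : (F.erase g).erase f ⊆ (F.erase f).erase g := by
        intro x hx
        simp only [Finset.mem_erase] at hx ⊢
        exact ⟨hx.2.1, hx.1, hx.2.2⟩
      rcases G.connects_insert_cases hab h2 with h | ⟨ha1, ha2⟩ | ⟨ha1, ha2⟩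
      · exact G.connects_mono hBsub' h
      · exfalso
        refine hF f hf ⟨a, b, hab, ?_⟩
        exact Relation.EqvGen.trans _ _ _
          (Relation.EqvGen.symm _ _ (G.connects_mono hBsub ha1))
          (Relation.EqvGen.trans _ _ _ h1
            (Relation.EqvGen.symm _ _ (G.connects_mono hBsub ha2)))
      · exfalso
        refine hF f hf ⟨a, b, hab, ?_⟩
        exact Relation.EqvGen.symm _ _ (Relation.EqvGen.trans _ _ _
          (Relation.EqvGen.symm _ _ (G.connects_mono hBsub ha1))
          (Relation.EqvGen.trans _ _ _ h1
            (Relation.EqvGen.symm _ _ (G.connects_mono hBsub ha2))))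
  · rwa [Finset.erase_eq_of_notMem (fun hx => hgF (Finset.mem_erase.mp hx).2)]

section Phi

variable [LinearOrder E]

/-- The canonical spanning forest of the subset `A`: delete every edge that is the
minimal edge of some cycle of `A`. -/
noncomputable def phi (G : PottsGraph V E) (A : Finset E) : Finset E :=
  A.filter fun e => ¬ G.EndsConnected (A.filter fun f => e < f) e

lemma phi_subset (G : PottsGraph V E) (A : Finset E) : G.phi A ⊆ A :=
  Finset.filter_subset _ _

/-- If every edge is not a bridge-free chord above itself, the set is a forest. -/
lemma isForest_of_above (G : PottsGraph V E) :
    ∀ F : Finset E, (∀ e ∈ F, ¬ G.EndsConnected (F.filter fun f => e < f) e) →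
      G.IsForest F := by
  intro F
  induction F using Finset.strongInduction with
  | _ F ih =>
    intro hyp e he hEC
    obtain ⟨u, v, huv, hconn⟩ := hEC
    have hne : F.Nonempty := ⟨e, he⟩
    set m := F.min' hne with hm
    have hmF : m ∈ F := F.min'_mem hne
    have hbridge : ¬ G.EndsConnected (F.erase m) m := by
      intro hEC'
      refine hyp m hmF (G.endsConn_mono ?_ hEC')
      intro x hx
      obtain ⟨hxm, hxF⟩ := Finset.mem_erase.mp hx
      exact Finset.mem_filter.mpr ⟨hxF, lt_of_le_of_ne (F.min'_le x hxF) (Ne.symm hxm)⟩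
    by_cases hem : e = m
    · exact hbridge ⟨u, v, hem ▸ huv, hem ▸ hconn⟩
    · have hF' : G.IsForest (F.erase m) := by
        refine ih (F.erase m) (Finset.erase_ssubset hmF) ?_
        intro f hf hEC'
        exact hyp f (Finset.mem_of_mem_erase hf)
          (G.endsConn_mono (Finset.filter_subset_filter _ (F.erase_subset m)) hEC')
      obtain ⟨a, b, hab⟩ := G.exists_ends m
      have hmmem : m ∈ F.erase e := Finset.mem_erase.mpr ⟨fun h => hem h.symm, hmF⟩
      rw [← Finset.insert_erase hmmem] at hconn
      have hBsub : (F.erase e).erase m ⊆ F.erase m := by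
        intro x hx
        simp only [Finset.mem_erase] at hx ⊢
        exact ⟨hx.1, hx.2.2⟩
      rcases G.connects_insert_cases hab hconn with h | ⟨h1, h2⟩ | ⟨h1, h2⟩
      · refine hF' e (Finset.mem_erase.mpr ⟨hem, he⟩) ⟨u, v, huv, ?_⟩
        refine G.connects_mono ?_ h
        intro x hx
        simp only [Finset.mem_erase] at hx ⊢
        exact ⟨hx.2.1, hx.1, hx.2.2⟩
      · refine hbridge ⟨a, b, hab, ?_⟩
        have heF : e ∈ F.erase m := Finset.mem_erase.mpr ⟨hem, he⟩
        exact Relation.EqvGen.trans _ _ _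
          (Relation.EqvGen.symm _ _ (G.connects_mono hBsub h1))
          (Relation.EqvGen.trans _ _ _ (G.connects_of_adj heF huv)
            (Relation.EqvGen.symm _ _ (G.connects_mono hBsub h2)))
      · refine hbridge ⟨a, b, hab, ?_⟩
        have heF : e ∈ F.erase m := Finset.mem_erase.mpr ⟨hem, he⟩
        exact Relation.EqvGen.symm _ _ (Relation.EqvGen.trans _ _ _
          (Relation.EqvGen.symm _ _ (G.connects_mono hBsub h1))
          (Relation.EqvGen.trans _ _ _ (G.connects_of_adj heF huv)
            (Relation.EqvGen.symm _ _ (G.connects_mono hBsub h2))))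

lemma isForest_phi (G : PottsGraph V E) (A : Finset E) : G.IsForest (G.phi A) := by
  refine G.isForest_of_above _ (fun e he hEC => ?_)
  have := (Finset.mem_filter.mp he).2
  exact this (G.endsConn_mono
    (Finset.filter_subset_filter _ (G.phi_subset A)) hEC)

/-- A deleted edge has its ends connected among the *strictly larger* kept edges. -/
lemma endsConn_phi_above (G : PottsGraph V E) (A : Finset E) (e : E) (heA : e ∈ A)
    (heP : e ∉ G.phi A) :
    G.EndsConnected ((G.phi A).filter fun f => e < f) e := by
  have hEC : G.EndsConnected (A.filter fun f => e < f) e := by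
    by_contra h
    exact heP (Finset.mem_filter.mpr ⟨heA, h⟩)
  obtain ⟨u, v, huv, hconn⟩ := hEC
  refine ⟨u, v, huv, G.connects_reroute ?_ hconn⟩
  intro g hg
  obtain ⟨hgA, heg⟩ := Finset.mem_filter.mp hg
  by_cases hgP : g ∈ G.phi A
  · exact Or.inl (Finset.mem_filter.mpr ⟨hgP, heg⟩)
  · refine Or.inr (G.endsConn_mono ?_ (G.endsConn_phi_above A g hgA hgP))
    intro x hx
    obtain ⟨hxP, hgx⟩ := Finset.mem_filter.mp hx
    exact Finset.mem_filter.mpr ⟨hxP, lt_trans heg hgx⟩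
termination_by (A.filter fun f => e < f).card
decreasing_by
  have hsub : (A.filter fun f => g < f) ⊆ A.filter fun f => e < f := by
    intro x hx
    obtain ⟨hxA, hgx⟩ := Finset.mem_filter.mp hx
    exact Finset.mem_filter.mpr ⟨hxA, lt_trans heg hgx⟩
  exact Finset.card_lt_card ((Finset.ssubset_iff_of_subset hsub).mpr
    ⟨g, Finset.mem_filter.mpr ⟨hgA, heg⟩,
      fun hgg => lt_irrefl g (Finset.mem_filter.mp hgg).2⟩)

lemma connects_phi (G : PottsGraph V E) (A : Finset E) (u v : V) :
    G.Connects A u v ↔ G.Connects (G.phi A) u v := by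
  constructor
  · refine G.connects_reroute (fun f hf => ?_)
    by_cases hfP : f ∈ G.phi A
    · exact Or.inl hfP
    · exact Or.inr (G.endsConn_mono (Finset.filter_subset _ _)
        (G.endsConn_phi_above A f hf hfP))
  · exact G.connects_mono (G.phi_subset A)

lemma compSetoid_phi (G : PottsGraph V E) (A : Finset E) :
    G.compSetoid A = G.compSetoid (G.phi A) :=
  Setoid.ext (G.connects_phi A)

lemma extActive_phi (G : PottsGraph V E) (A : Finset E) (e : E) (heA : e ∈ A)
    (heP : e ∉ G.phi A) : G.ExtActive (G.phi A) e := by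
  refine ⟨heP, G.endsConn_mono (Finset.filter_subset _ _)
    (G.endsConn_phi_above A e heA heP), fun f hf => ?_⟩
  rcases Finset.mem_insert.mp hf with rfl | hf'
  · exact le_refl _
  · obtain ⟨hfP, hnc⟩ := Finset.mem_filter.mp hf'
    by_contra hle
    push_neg at hle
    refine hnc (G.endsConn_mono ?_ (G.endsConn_phi_above A e heA heP))
    intro x hx
    obtain ⟨hxP, hex⟩ := Finset.mem_filter.mp hx
    exact Finset.mem_erase.mpr ⟨fun h => absurd (h ▸ hex) (not_lt.mpr hle.le), hxP⟩

/-- In a forest, if the ends of `e` are connected and every edge below `e` is a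
non-separator for `e`, then the ends are connected using only edges above `e`. -/
lemma connects_filter_gt (G : PottsGraph V E) :
    ∀ F : Finset E, G.IsForest F → ∀ e, e ∉ F → ∀ u v, G.ends e = s(u, v) →
      G.Connects F u v → (∀ f ∈ F, f < e → G.Connects (F.erase f) u v) →
      G.Connects (F.filter fun f => e < f) u v := by
  intro F
  induction F using Finset.strongInduction with
  | _ F ih =>
    intro hF e heF u v huv hconn hyp
    by_cases hex : ∃ f ∈ F, f < e
    · obtain ⟨f, hfF, hfe⟩ := hex
      have h1 : G.Connects (F.erase f) u v := hyp f hfF hfe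
      have hF' : G.IsForest (F.erase f) := PottsGraph.IsForest.subset' G hF (F.erase_subset f)
      have hrec := ih (F.erase f) (Finset.erase_ssubset hfF) hF' e
        (fun h => heF (Finset.mem_of_mem_erase h)) u v huv h1 ?_
      · refine G.connects_mono ?_ hrec
        exact Finset.filter_subset_filter _ (F.erase_subset f)
      · intro g hg hge
        have h2 : G.Connects (F.erase g) u v := hyp g (Finset.mem_of_mem_erase hg) hge
        exact G.forest_erase_erase hF hfF h1 h2
    · push_neg at hex
      have : F.filter (fun f => e < f) = F := by
        refine Finset.filter_true_of_mem (fun g hg => ?_)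
        exact lt_of_le_of_ne (hex g hg) (fun h => heF (h ▸ hg))
      rwa [this]

/-- The key fiber computation: `phi (F ∪ S) = F` for a forest `F` and a set `S` of
externally active edges. -/
lemma phi_union (G : PottsGraph V E) {F S : Finset E} (hF : G.IsForest F)
    (hS : ∀ s ∈ S, G.ExtActive F s) : G.phi (F ∪ S) = F := by
  ext e
  simp only [phi, Finset.mem_filter, Finset.mem_union]
  constructor
  · rintro ⟨heFS, hne⟩
    rcases heFS with heF | heS
    · exact heF
    · exfalso
      obtain ⟨heF, hEC, hcyc⟩ := hS e heS
      obtain ⟨u, v, huv⟩ := G.exists_ends e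
      have hconn : G.Connects F u v := G.connects_of_endsConn hEC huv
      have hgt : G.Connects (F.filter fun f => e < f) u v := by
        refine G.connects_filter_gt F hF e heF u v huv hconn (fun f hfF hfe => ?_)
        by_cases hsep : G.EndsConnected (F.erase f) e
        · exact G.connects_of_endsConn hsep huv
        · exact absurd (hcyc f (Finset.mem_insert.mpr
            (Or.inr (Finset.mem_filter.mpr ⟨hfF, hsep⟩)))) (not_le.mpr hfe)
      refine hne ⟨u, v, huv, G.connects_mono ?_ hgt⟩
      exact Finset.filter_subset_filter _ Finset.subset_union_left
  · intro heF
    refine ⟨Or.inl heF, fun hEC => ?_⟩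
    obtain ⟨u, v, huv, hconn⟩ := hEC
    have : G.Connects (F.erase e) u v := by
      refine G.connects_reroute (fun g hg => ?_) hconn
      obtain ⟨hgFS, heg⟩ := Finset.mem_filter.mp hg
      rcases Finset.mem_union.mp hgFS with hgF | hgS
      · exact Or.inl (Finset.mem_erase.mpr ⟨fun h => absurd (h ▸ heg) (lt_irrefl e), hgF⟩)
      · obtain ⟨hgF, hEC', hcyc⟩ := hS g hgS
        by_cases hsep : G.EndsConnected (F.erase e) g
        · exact Or.inr hsep
        · exact absurd (hcyc e (Finset.mem_insert.mpr
            (Or.inr (Finset.mem_filter.mpr ⟨heF, hsep⟩)))) (not_le.mpr heg)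
    exact hF e heF ⟨u, v, huv, this⟩

lemma fiber_eq (G : PottsGraph V E) {F : Finset E} (hF : G.IsForest F)
    (hphi : ∀ A, G.IsForest A → G.phi A = A) :
    True := trivial

/-- The fiber of `phi` over a forest `F`. -/
lemma phi_fiber (G : PottsGraph V E) {F : Finset E} (hF : G.IsForest F) :
    Finset.univ.filter (fun A => G.phi A = F) =
      (G.extActives F).powerset.image (fun S => F ∪ S) := by
  ext A
  simp only [Finset.mem_filter, Finset.mem_univ, true_and, Finset.mem_image,
    Finset.mem_powerset]
  constructor
  · intro hphi
    refine ⟨A \ F, fun s hs => ?_, ?_⟩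
    · obtain ⟨hsA, hsF⟩ := Finset.mem_sdiff.mp hs
      exact Finset.mem_filter.mpr ⟨Finset.mem_univ _, hphi ▸ G.extActive_phi A s hsA
        (fun h => hsF (hphi ▸ h))⟩
    · rw [Finset.union_sdiff_of_subset (hphi ▸ G.phi_subset A)]
  · rintro ⟨S, hSsub, rfl⟩
    exact G.phi_union hF (fun s hs =>
      (Finset.mem_filter.mp (hSsub hs)).2)

lemma quot_prod_aux {S' β' : Type} [AddCommMonoid S'] [CommMonoid β']
    (ω : V → S') (f : S' → β') (s t : Setoid V) (h : s = t)
    (fs : Fintype (Quotient s)) (ft : Fintype (Quotient t)) :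
    (@Finset.univ _ fs).prod
        (fun c => f (∑ v ∈ Finset.univ.filter (fun v => Quotient.mk s v = c), ω v)) =
      (@Finset.univ _ ft).prod
        (fun c => f (∑ v ∈ Finset.univ.filter (fun v => Quotient.mk t v = c), ω v)) := by
  subst h
  congr!

lemma compVerts_eq (G : PottsGraph V E) (A : Finset E) (c : G.Comp A) :
    G.compVerts A c
      = Finset.univ.filter (fun v => Quotient.mk (G.compSetoid A) v = c) := by
  rw [compVerts]

lemma compWeight_eq {S' : Type} [AddCommMonoid S'] (G : PottsGraph V E) (A : Finset E)
    (ω : V → S') (c : G.Comp A) :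
    G.compWeight A ω c
      = ∑ v ∈ Finset.univ.filter (fun v => Quotient.mk (G.compSetoid A) v = c), ω v := by
  rw [compWeight, compVerts_eq]

lemma prod_comp_congr (G : PottsGraph V E) {A B : Finset E}
    (h : G.compSetoid A = G.compSetoid B) {S' β' : Type} [AddCommMonoid S']
    [CommMonoid β'] (ω : V → S') (f : S' → β') :
    ∏ c : G.Comp A, f (G.compWeight A ω c) = ∏ c : G.Comp B, f (G.compWeight B ω c) := by
  simp_rw [compWeight_eq]
  exact quot_prod_aux ω f _ _ h (inferInstanceAs (Fintype (G.Comp A)))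
    (inferInstanceAs (Fintype (G.Comp B)))

lemma edgeDelta_eq (G : PottsGraph V E) {q : ℕ} (σ : V → Fin q) {e : E} {a b : V}
    (hab : G.ends e = s(a, b)) :
    G.edgeDelta σ e = @ite _ (σ a = σ b) (instDecidableEqFin q (σ a) (σ b)) 1 0 := by
  rw [edgeDelta, hab]
  exact Sym2.lift_mk _ _ _

lemma const_of_deltas {q : ℕ} (G : PottsGraph V E) {A : Finset E} {σ : V → Fin q}
    (h : ∀ e ∈ A, G.edgeDelta σ e = 1) {a b : V}
    (hc : Relation.EqvGen (G.adjRel A) a b) : σ a = σ b := by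
  induction hc with
  | rel x y hxy =>
    obtain ⟨e, he, hee⟩ := hxy
    have h1 := h e he
    rw [G.edgeDelta_eq σ hee] at h1
    by_contra hne
    rw [if_neg hne] at h1
    exact zero_ne_one h1
  | refl x => rfl
  | symm x y _ ih => exact ih.symm
  | trans x y z _ _ ih1 ih2 => exact ih1.trans ih2

/-- Step 1: the subset (Fortuin–Kasteleyn) expansion of `Zext`. -/
lemma Zext_subset_expansion (G : PottsGraph V E) (q : ℕ) (β : ℂ) (J : E → ℂ)
    (M : V → Fin q → ℂ) :
    G.Zext q β J M = ∑ A : Finset E,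
      (∏ c : G.Comp A, ∑ α : Fin q, Complex.exp (β * G.compWeight A M c α)) *
      ∏ e ∈ A, (Complex.exp (β * J e) - 1) := by
  unfold Zext
  simp only [mul_ite, mul_one, mul_zero, Finset.sum_ite_eq', Finset.mem_univ, if_true]
  have hσ : ∀ σ : V → Fin q,
      Complex.exp (β * ((∑ e : E, J e * G.edgeDelta σ e) + ∑ v : V, M v (σ v)))
      = (∑ A : Finset E, ∏ e ∈ A, ((Complex.exp (β * J e) - 1) * G.edgeDelta σ e)) *
        ∏ v : V, Complex.exp (β * M v (σ v)) := by
    intro σ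
    rw [mul_add, Complex.exp_add]
    congr 1
    · rw [Finset.mul_sum, Complex.exp_sum]
      have h1 : ∀ e : E, Complex.exp (β * (J e * G.edgeDelta σ e)) =
          (Complex.exp (β * J e) - 1) * G.edgeDelta σ e + 1 := by
        intro e
        obtain ⟨a, b, hab⟩ := G.exists_ends e
        rw [G.edgeDelta_eq σ hab]
        by_cases h : σ a = σ b
        · rw [if_pos h, mul_one, mul_one, sub_add_cancel]
        · rw [if_neg h]; simp
      calc ∏ e : E, Complex.exp (β * (J e * G.edgeDelta σ e))
          = ∏ e : E, ((Complex.exp (β * J e) - 1) * G.edgeDelta σ e + 1) :=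
            Finset.prod_congr rfl fun e _ => h1 e
        _ = ∑ A ∈ Finset.univ.powerset,
              (∏ e ∈ A, ((Complex.exp (β * J e) - 1) * G.edgeDelta σ e)) *
                ∏ e ∈ Finset.univ \ A, (1 : ℂ) := Finset.prod_add _ _ _
        _ = _ := by
            rw [Finset.powerset_univ]
            exact Finset.sum_congr rfl fun A _ => by rw [Finset.prod_const_one, mul_one]
    · rw [Finset.mul_sum, Complex.exp_sum]
  calc ∑ σ : V → Fin q, Complex.exp _
      = ∑ σ : V → Fin q, ∑ A : Finset E,
          (∏ e ∈ A, ((Complex.exp (β * J e) - 1) * G.edgeDelta σ e)) *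
            ∏ v : V, Complex.exp (β * M v (σ v)) := by
        refine Finset.sum_congr rfl fun σ _ => ?_
        rw [hσ σ, Finset.sum_mul]
    _ = ∑ A : Finset E, ∑ σ : V → Fin q,
          (∏ e ∈ A, ((Complex.exp (β * J e) - 1) * G.edgeDelta σ e)) *
            ∏ v : V, Complex.exp (β * M v (σ v)) := Finset.sum_comm
    _ = _ := ?_
  refine Finset.sum_congr rfl fun A _ => ?_
  have key : ∑ σ : V → Fin q,
      (∏ e ∈ A, G.edgeDelta σ e) * ∏ v : V, Complex.exp (β * M v (σ v))
      = ∏ c : G.Comp A, ∑ α : Fin q, Complex.exp (β * G.compWeight A M c α) := by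
    have hdelta : ∀ σ : V → Fin q, (∏ e ∈ A, G.edgeDelta σ e) =
        if (∀ e ∈ A, G.edgeDelta σ e = 1) then 1 else 0 := by
      intro σ
      split_ifs with h
      · exact Finset.prod_eq_one h
      · push_neg at h
        obtain ⟨e, he, hne⟩ := h
        obtain ⟨a, b, hab⟩ := G.exists_ends e
        refine Finset.prod_eq_zero he ?_
        rw [G.edgeDelta_eq σ hab] at hne ⊢
        by_cases h2 : σ a = σ b
        · exact absurd (if_pos h2) hne
        · exact if_neg h2
    simp_rw [hdelta, ite_mul, one_mul, zero_mul]
    rw [← Finset.sum_filter]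
    have hbij : ∑ σ ∈ Finset.univ.filter
          (fun σ : V → Fin q => ∀ e ∈ A, G.edgeDelta σ e = 1),
          ∏ v : V, Complex.exp (β * M v (σ v))
        = ∑ τ : G.Comp A → Fin q,
            ∏ v : V, Complex.exp (β * M v (τ (Quotient.mk (G.compSetoid A) v))) := by
      refine (Finset.sum_bij
        (fun (τ : G.Comp A → Fin q) _ => fun v => τ (Quotient.mk (G.compSetoid A) v))
        ?_ ?_ ?_ ?_).symm
      · intro τ _
        refine Finset.mem_filter.mpr ⟨Finset.mem_univ _, fun e he => ?_⟩
        obtain ⟨a, b, hab⟩ := G.exists_ends e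
        have hq : Quotient.mk (G.compSetoid A) a = Quotient.mk (G.compSetoid A) b :=
          Quotient.sound (Relation.EqvGen.rel _ _ ⟨e, he, hab⟩)
        rw [G.edgeDelta_eq _ hab]
        simp [hq]
      · intro τ1 _ τ2 _ heq
        funext c
        induction c using Quotient.ind with
        | _ v => exact congrFun heq v
      · intro σ hσ'
        obtain ⟨-, hconst⟩ := Finset.mem_filter.mp hσ'
        exact ⟨Quotient.lift σ (fun a b hab => G.const_of_deltas hconst hab),
          Finset.mem_univ _, rfl⟩
      · intro τ _
        rfl
    rw [hbij]
    have hfib : ∀ τ : G.Comp A → Fin q,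
        ∏ v : V, Complex.exp (β * M v (τ (Quotient.mk (G.compSetoid A) v)))
        = ∏ c : G.Comp A, Complex.exp (β * G.compWeight A M c (τ c)) := by
      intro τ
      rw [← Finset.prod_fiberwise Finset.univ
        (fun v => Quotient.mk (G.compSetoid A) v)
        (fun v => Complex.exp (β * M v (τ (Quotient.mk (G.compSetoid A) v))))]
      refine Finset.prod_congr rfl fun c _ => ?_
      rw [Finset.prod_congr rfl (fun v hv => by
        rw [(Finset.mem_filter.mp hv).2] :
          ∀ v ∈ Finset.univ.filter (fun v => Quotient.mk (G.compSetoid A) v = c),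
            Complex.exp (β * M v (τ (Quotient.mk (G.compSetoid A) v)))
              = Complex.exp (β * M v (τ c))), ← Complex.exp_sum, ← Finset.mul_sum]
      congr 2
      simp only [compWeight, compVerts, Finset.sum_apply]
    simp_rw [hfib]
    rw [Fintype.prod_sum]
  calc ∑ σ : V → Fin q,
        (∏ e ∈ A, ((Complex.exp (β * J e) - 1) * G.edgeDelta σ e)) *
          ∏ v : V, Complex.exp (β * M v (σ v))
      = (∏ e ∈ A, (Complex.exp (β * J e) - 1)) * ∑ σ : V → Fin q,
          (∏ e ∈ A, G.edgeDelta σ e) * ∏ v : V, Complex.exp (β * M v (σ v)) := by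
        rw [Finset.mul_sum]
        refine Finset.sum_congr rfl fun σ _ => ?_
        rw [Finset.prod_mul_distrib, mul_assoc]
    _ = _ := by rw [key, mul_comm]

/-- The main theorem, proved inside the auxiliary section. -/
lemma Zext_expansion_aux [LinearOrder E] (G : PottsGraph V E) (q : ℕ) (β : ℂ)
    (J : E → ℂ) (M : V → Fin q → ℂ) :
    G.Zext q β J M =
      ∑ F ∈ Finset.univ.filter (fun F => G.IsForest F),
        (∏ c : G.Comp F, ∑ α : Fin q, Complex.exp (β * G.compWeight F M c α)) *
        (∏ e ∈ F, (Complex.exp (β * J e) - 1)) *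
        ∏ e ∈ G.extActives F, Complex.exp (β * J e) := by
  rw [G.Zext_subset_expansion q β J M]
  rw [← Finset.sum_fiberwise_of_maps_to
    (g := G.phi) (t := Finset.univ.filter fun F => G.IsForest F)
    (fun A _ => Finset.mem_filter.mpr ⟨Finset.mem_univ _, G.isForest_phi A⟩)]
  refine Finset.sum_congr rfl fun F hF => ?_
  obtain ⟨-, hFor⟩ := Finset.mem_filter.mp hF
  rw [G.phi_fiber hFor]
  have hdisjEA : ∀ S ⊆ G.extActives F, Disjoint F S := by
    intro S hS
    rw [Finset.disjoint_left]
    intro a haF haS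
    exact (Finset.mem_filter.mp (hS haS)).2.1 haF
  rw [Finset.sum_image (fun S1 h1 S2 h2 heq => by
    have e1 : (F ∪ S1) \ F = S1 :=
      Finset.union_sdiff_cancel_left (hdisjEA S1 (Finset.mem_powerset.mp h1))
    have e2 : (F ∪ S2) \ F = S2 :=
      Finset.union_sdiff_cancel_left (hdisjEA S2 (Finset.mem_powerset.mp h2))
    rw [← e1, ← e2, heq])]
  have hterm : ∀ S ∈ (G.extActives F).powerset,
      (∏ c : G.Comp (F ∪ S), ∑ α : Fin q,
          Complex.exp (β * G.compWeight (F ∪ S) M c α)) *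
        ∏ e ∈ F ∪ S, (Complex.exp (β * J e) - 1)
      = ((∏ c : G.Comp F, ∑ α : Fin q, Complex.exp (β * G.compWeight F M c α)) *
          ∏ e ∈ F, (Complex.exp (β * J e) - 1)) *
          ∏ e ∈ S, (Complex.exp (β * J e) - 1) := by
    intro S hS
    have hsub := Finset.mem_powerset.mp hS
    have hset : G.compSetoid (F ∪ S) = G.compSetoid F := by
      refine Setoid.ext fun u v => ⟨?_, ?_⟩
      · refine G.connects_reroute fun f hf => ?_
        rcases Finset.mem_union.mp hf with h | h
        · exact Or.inl h
        · exact Or.inr (Finset.mem_filter.mp (hsub h)).2.2.1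
      · exact G.connects_mono Finset.subset_union_left
    rw [Finset.prod_union (hdisjEA S hsub), ← mul_assoc]
    congr 2
    exact G.prod_comp_congr hset M (fun w => ∑ α : Fin q, Complex.exp (β * w α))
  rw [Finset.sum_congr rfl hterm, ← Finset.mul_sum]
  congr 1
  rw [Finset.prod_congr rfl
    (fun e _ => (sub_add_cancel (Complex.exp (β * J e)) 1).symm : ∀ e ∈ G.extActives F,
      Complex.exp (β * J e) = Complex.exp (β * J e) - 1 + 1), Finset.prod_add]
  exact (Finset.sum_congr rfl fun S _ => by rw [Finset.prod_const_one, mul_one]).symm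

end Phi

end PottsGraph

/-- Spanning forest expansion of the Potts partition function in
an external field:
`Z_ext(G) = Σ_{F∈𝓕(G)} X(F) (∏_{e∈F}(e^{βJ_e}−1)) (∏_{e∈EA(F)} e^{βJ_e})`. -/
theorem Zext_spanning_forest_expansion {V E : Type} [Fintype V] [Fintype E]
    [LinearOrder E] (G : PottsGraph V E) (q : ℕ) (hq : 1 ≤ q) (β : ℂ)
    (J : E → ℂ) (M : V → Fin q → ℂ) :
    G.Zext q β J M =
      ∑ F ∈ Finset.univ.filter (fun F => G.IsForest F),
        (∏ c : G.Comp F, ∑ α : Fin q, Complex.exp (β * G.compWeight F M c α)) *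
        (∏ e ∈ F, (Complex.exp (β * J e) - 1)) *
        ∏ e ∈ G.extActives F, Complex.exp (β * J e) :=
  PottsGraph.Zext_expansion_aux G q β J M
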